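/- Let τ > 0, δ ∈ (0,1/2), C₂ > 0, a₁, a₂ ∈ ℝ, κ₁ ≥ 0, κ₂ > 0, and let M be the operator (Mf)(x,y) = −(1/τ)(x²−y²−a₁)∂_x f − (1/τ)(2xy − a₂)∂_y f + (κ₁/τ)∂_x² f + (κ₂/τ)∂_y² f. Define φ₂(x,y) = C₂(−x + |y|^{δ/2}) on X₂ = {(x,y) : −2 ≤ x ≤ 2, |y| ≥ 2^{2/δ}}. Then φ₂ ≥ 0 on X₂, φ₂ → ∞ as |y| → ∞ in X₂, and Mφ₂ → −∞ as |y| → ∞ in X₂; in fact there is a constant c > 0 such that for |y| sufficiently large in X₂, τ(Mφ₂)(x,y) ≤ −c y². -/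

import Mathlib

/-- Partial derivative in `x` of a function of two real variables. -/
noncomputable def pdx (f : ℝ → ℝ → ℝ) (x y : ℝ) : ℝ := deriv (fun x' => f x' y) x

/-- Partial derivative in `y` of a function of two real variables. -/
noncomputable def pdy (f : ℝ → ℝ → ℝ) (x y : ℝ) : ℝ := deriv (fun y' => f x y') y

/-- The generator `M` of the planar diffusion, in real coordinates. -/
noncomputable def Mop (τ a₁ a₂ κ₁ κ₂ : ℝ) (f : ℝ → ℝ → ℝ) (x y : ℝ) : ℝ :=
  -(1 / τ) * (x ^ 2 - y ^ 2 - a₁) * pdx f x y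
    - (1 / τ) * (2 * x * y - a₂) * pdy f x y
    + (κ₁ / τ) * pdx (fun x' y' => pdx f x' y') x y
    + (κ₂ / τ) * pdy (fun x' y' => pdy f x' y') x y

lemma habs_rpow (r : ℝ) {y : ℝ} (hy : y ≠ 0) :
    HasDerivAt (fun y' : ℝ => |y'| ^ r) (r * y * |y| ^ (r - 2)) y := by
  rcases hy.lt_or_gt with h | h
  · have hny : (0:ℝ) < -y := by linarith
    have h1 : HasDerivAt (fun z : ℝ => z ^ r) (r * (-y) ^ (r - 1)) (-y) :=
      Real.hasDerivAt_rpow_const (Or.inl hny.ne')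
    have h2 : HasDerivAt (fun y' : ℝ => (-y') ^ r) (r * (-y) ^ (r - 1) * (-1)) y :=
      h1.comp y (hasDerivAt_neg y)
    have heq : r * (-y) ^ (r - 1) * (-1) = r * y * |y| ^ (r - 2) := by
      rw [abs_of_neg h]
      have : (-y) ^ (r - 1) = (-y) ^ (1 + (r - 2)) := by ring_nf
      rw [this, Real.rpow_add hny, Real.rpow_one]; ring
    rw [heq] at h2
    apply h2.congr_of_eventuallyEq
    filter_upwards [eventually_lt_nhds h] with z hz
    rw [abs_of_neg hz]
  · have h1 : HasDerivAt (fun z : ℝ => z ^ r) (r * y ^ (r - 1)) y :=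
      Real.hasDerivAt_rpow_const (Or.inl hy)
    have heq : r * y ^ (r - 1) = r * y * |y| ^ (r - 2) := by
      rw [abs_of_pos h]
      have : y ^ (r - 1) = y ^ (1 + (r - 2)) := by ring_nf
      rw [this, Real.rpow_add h, Real.rpow_one]; ring
    rw [heq] at h1
    apply h1.congr_of_eventuallyEq
    filter_upwards [eventually_gt_nhds h] with z hz
    rw [abs_of_pos hz]

lemma sq_mul_rpow {y : ℝ} (hy : y ≠ 0) (s : ℝ) : y * y * |y| ^ s = |y| ^ (s + 2) := by
  have h : (0:ℝ) < |y| := abs_pos.2 hy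
  have h2 : y * y = |y| ^ (2:ℝ) := by
    rw [show (2:ℝ) = ((2:ℕ):ℝ) by norm_num, Real.rpow_natCast]
    rw [pow_two, abs_mul_abs_self]
  rw [h2, ← Real.rpow_add h]; ring_nf

lemma hasDerivAt_pdy2 (C₂ r : ℝ) {y : ℝ} (hy : y ≠ 0) :
    HasDerivAt (fun y' : ℝ => C₂ * (r * y' * |y'| ^ (r - 2)))
      (C₂ * (r * (r - 1) * |y| ^ (r - 2))) y := by
  have h1 : HasDerivAt (fun y' : ℝ => y' * |y'| ^ (r - 2))
      (1 * |y| ^ (r - 2) + y * ((r - 2) * y * |y| ^ (r - 2 - 2))) y :=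
    (hasDerivAt_id y).mul (habs_rpow (r - 2) hy)
  have h2 := h1.const_mul (C₂ * r)
  have heq : C₂ * r * (1 * |y| ^ (r - 2) + y * ((r - 2) * y * |y| ^ (r - 2 - 2)))
      = C₂ * (r * (r - 1) * |y| ^ (r - 2)) := by
    have h3 := sq_mul_rpow hy (r - 2 - 2)
    have h4 : r - 2 - 2 + 2 = r - 2 := by ring
    rw [h4] at h3
    rw [← h3]; ring
  rw [heq] at h2
  exact h2.congr_of_eventuallyEq (by filter_upwards with z; ring)

lemma Mop_formula (τ δ C₂ a₁ a₂ κ₁ κ₂ : ℝ) (hτ : τ ≠ 0)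
    (φ₂ : ℝ → ℝ → ℝ) (hφ : ∀ x y, φ₂ x y = C₂ * (-x + |y| ^ (δ / 2 : ℝ)))
    (x : ℝ) {y : ℝ} (hy : y ≠ 0) :
    τ * Mop τ a₁ a₂ κ₁ κ₂ φ₂ x y =
      C₂ * (x ^ 2 - y ^ 2 - a₁)
        - (2 * x * y - a₂) * (C₂ * (δ / 2 * y * |y| ^ (δ / 2 - 2)))
        + κ₂ * (C₂ * (δ / 2 * (δ / 2 - 1) * |y| ^ (δ / 2 - 2))) := by
  set r : ℝ := δ / 2 with hr
  have hpdx : ∀ x' y' : ℝ, pdx φ₂ x' y' = -C₂ := by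
    intro x' y'
    have h : HasDerivAt (fun x'' : ℝ => C₂ * (-x'' + |y'| ^ r)) (C₂ * -1) x' := by
      simpa using (((hasDerivAt_id x').neg.add_const (|y'| ^ r)).const_mul C₂)
    have h2 : (fun x'' => φ₂ x'' y') = fun x'' : ℝ => C₂ * (-x'' + |y'| ^ r) := by
      funext x''; rw [hφ]
    rw [pdx, h2, h.deriv]; ring
  have hpdy : ∀ {y' : ℝ}, y' ≠ 0 → pdy φ₂ x y' = C₂ * (r * y' * |y'| ^ (r - 2)) := by
    intro y' hy'
    have h : HasDerivAt (fun y'' : ℝ => C₂ * (-x + |y''| ^ r))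
        (C₂ * (r * y' * |y'| ^ (r - 2))) y' := ((habs_rpow r hy').const_add (-x)).const_mul C₂
    have h2 : (fun y'' => φ₂ x y'') = fun y'' : ℝ => C₂ * (-x + |y''| ^ r) := by
      funext y''; rw [hφ]
    rw [pdy, h2, h.deriv]
  have hpdxx : pdx (fun x' y' => pdx φ₂ x' y') x y = 0 := by
    have h2 : (fun x' => pdx φ₂ x' y) = fun _ : ℝ => -C₂ := by funext x'; rw [hpdx]
    rw [pdx, h2, deriv_const]
  have hpdyy : pdy (fun x' y' => pdy φ₂ x' y') x y = C₂ * (r * (r - 1) * |y| ^ (r - 2)) := by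
    have h := (hasDerivAt_pdy2 C₂ r hy).congr_of_eventuallyEq
      (f₁ := fun y' => pdy φ₂ x y') ?_
    · rw [pdy, h.deriv]
    · filter_upwards [eventually_ne_nhds hy] with z hz
      exact hpdy hz
  rw [Mop, hpdx, hpdy hy, hpdxx, hpdyy]
  field_simp
  ring

set_option maxHeartbeats 1000000 in
/-- the Lyapunov function `φ₂(x,y) = C₂(−x + |y|^{δ/2})` on
`X₂ = {−2 ≤ x ≤ 2, |y| ≥ 2^{2/δ}}`: nonnegative, tends to `∞` as `|y| → ∞`
in `X₂`, and `τ Mφ₂ ≤ −c y²` for `|y|` large in `X₂`; in particular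
`Mφ₂ → −∞` as `|y| → ∞` in `X₂`. -/
theorem LF2 (τ δ C₂ a₁ a₂ κ₁ κ₂ : ℝ) (hτ : 0 < τ)
    (hδ : δ ∈ Set.Ioo (0 : ℝ) (1 / 2)) (hC : 0 < C₂)
    (hκ₁ : 0 ≤ κ₁) (hκ₂ : 0 < κ₂)
    (φ₂ : ℝ → ℝ → ℝ)
    (hφ : ∀ x y, φ₂ x y = C₂ * (-x + |y| ^ (δ / 2 : ℝ))) :
    (∀ x y : ℝ, -2 ≤ x → x ≤ 2 → (2 : ℝ) ^ (2 / δ : ℝ) ≤ |y| → 0 ≤ φ₂ x y) ∧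
    (∀ K : ℝ, ∃ Y : ℝ, ∀ x y : ℝ, -2 ≤ x → x ≤ 2 → (2 : ℝ) ^ (2 / δ : ℝ) ≤ |y| →
      Y ≤ |y| → K ≤ φ₂ x y) ∧
    (∀ K : ℝ, ∃ Y : ℝ, ∀ x y : ℝ, -2 ≤ x → x ≤ 2 → (2 : ℝ) ^ (2 / δ : ℝ) ≤ |y| →
      Y ≤ |y| → Mop τ a₁ a₂ κ₁ κ₂ φ₂ x y ≤ K) ∧
    (∃ c : ℝ, 0 < c ∧ ∃ Y : ℝ, ∀ x y : ℝ, -2 ≤ x → x ≤ 2 →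
      (2 : ℝ) ^ (2 / δ : ℝ) ≤ |y| → Y ≤ |y| →
      τ * Mop τ a₁ a₂ κ₁ κ₂ φ₂ x y ≤ -c * y ^ 2) := by
  obtain ⟨hδ0, hδ1⟩ := hδ
  set r : ℝ := δ / 2 with hrdef
  have hr0 : 0 < r := by positivity
  have hr1 : r < 1 := by rw [hrdef]; linarith
  have hbase : (1:ℝ) ≤ (2:ℝ) ^ (2 / δ : ℝ) :=
    Real.one_le_rpow (by norm_num) (by positivity)
  -- the core estimate (part 4)
  have part4 : ∃ c : ℝ, 0 < c ∧ ∃ Y : ℝ, ∀ x y : ℝ, -2 ≤ x → x ≤ 2 →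
      (2 : ℝ) ^ (2 / δ : ℝ) ≤ |y| → Y ≤ |y| →
      τ * Mop τ a₁ a₂ κ₁ κ₂ φ₂ x y ≤ -c * y ^ 2 := by
    refine ⟨C₂ / 2, by positivity, 2 * (4 + |a₁| + |a₂|) + 10, ?_⟩
    intro x y hx1 hx2 hyb hyY
    have h1y : (1:ℝ) ≤ |y| := le_trans hbase hyb
    have hy0 : y ≠ 0 := by
      intro h; rw [h, abs_zero] at h1y; linarith
    have hA : (0:ℝ) < |y| ^ (r - 2) := Real.rpow_pos_of_pos (abs_pos.2 hy0) _
    set A : ℝ := |y| ^ (r - 2) with hAdef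
    have hyA : |y| * A = |y| ^ (r - 1) := by
      rw [hAdef]
      nth_rewrite 1 [← Real.rpow_one |y|]
      rw [← Real.rpow_add (abs_pos.2 hy0)]; ring_nf
    have hprod : |y| * A ≤ 1 := by
      rw [hyA]
      exact Real.rpow_le_one_of_one_le_of_nonpos h1y (by linarith)
    rw [Mop_formula τ δ C₂ a₁ a₂ κ₁ κ₂ hτ.ne' φ₂ hφ x hy0, ← hrdef, ← hAdef]
    have habs2 : |2 * x * y - a₂| ≤ 4 * |y| + |a₂| := by
      have h5 : |2 * x * y| = 2 * |x| * |y| := by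
        rw [abs_mul, abs_mul, abs_two]
      have hxa : |x| ≤ 2 := abs_le.mpr ⟨hx1, hx2⟩
      calc |2 * x * y - a₂| ≤ |2 * x * y| + |a₂| := abs_sub _ _
        _ ≤ 4 * |y| + |a₂| := by rw [h5]; nlinarith [abs_nonneg y]
    have hterm3 : κ₂ * (C₂ * (r * (r - 1) * A)) ≤ 0 := by
      have h6 : r * (r - 1) * A ≤ 0 := by nlinarith [mul_pos hr0 hA]
      have h7 := mul_le_mul_of_nonneg_left h6 hC.le
      rw [mul_zero] at h7
      have h8 := mul_le_mul_of_nonneg_left h7 hκ₂.le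
      rw [mul_zero] at h8
      exact h8
    have hterm2 : -((2 * x * y - a₂) * (C₂ * (r * y * A))) ≤ C₂ * (4 * |y| + |a₂|) := by
      have h1 : -((2 * x * y - a₂) * (C₂ * (r * y * A)))
          ≤ |(2 * x * y - a₂) * (C₂ * (r * y * A))| := neg_le_abs _
      have h2 : |(2 * x * y - a₂) * (C₂ * (r * y * A))|
          = |2 * x * y - a₂| * (C₂ * (r * (|y| * A))) := by
        rw [abs_mul]
        congr 1
        rw [abs_mul, abs_mul, abs_mul, abs_of_pos hC, abs_of_pos hr0, abs_of_pos hA]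
        ring
      rw [h2] at h1
      have h3 : |2 * x * y - a₂| * (C₂ * (r * (|y| * A))) ≤ (4 * |y| + |a₂|) * (C₂ * (r * 1)) := by
        apply mul_le_mul habs2 _ _ (by positivity)
        · exact mul_le_mul_of_nonneg_left (mul_le_mul_of_nonneg_left hprod hr0.le) hC.le
        · positivity
      have h4 : (4 * |y| + |a₂|) * (C₂ * (r * 1)) ≤ C₂ * (4 * |y| + |a₂|) := by
        have hpos : (0:ℝ) ≤ 4 * |y| + |a₂| := by positivity
        have h41 : C₂ * (r * 1) ≤ C₂ := by nlinarith
        nlinarith [mul_le_mul_of_nonneg_left h41 hpos]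
      linarith
    have hq : 4 + |a₁| + |a₂| + 4 * |y| + y ^ 2 / 2 ≤ y ^ 2 := by
      nlinarith [sq_abs y, h1y, hyY, abs_nonneg a₁, abs_nonneg a₂]
    have hlin : x ^ 2 - a₁ + 4 * |y| + |a₂| + y ^ 2 / 2 - y ^ 2 ≤ 0 := by
      nlinarith [neg_le_abs a₁, hq]
    have hm := mul_le_mul_of_nonneg_left hlin hC.le
    rw [mul_zero] at hm
    linarith [hterm2, hterm3, hm]
  obtain ⟨c, hc, Y, hY⟩ := part4
  refine ⟨?_, ?_, ?_, ⟨c, hc, Y, hY⟩⟩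
  · -- part 1 : nonnegativity
    intro x y hx1 hx2 hyb
    have h1 : ((2:ℝ) ^ (2 / δ : ℝ)) ^ r ≤ |y| ^ r :=
      Real.rpow_le_rpow (by positivity) hyb hr0.le
    have h2 : ((2:ℝ) ^ (2 / δ : ℝ)) ^ r = 2 := by
      rw [← Real.rpow_mul (by norm_num : (0:ℝ) ≤ 2),
        show (2 / δ) * r = 1 by rw [hrdef]; field_simp, Real.rpow_one]
    rw [hφ]
    nlinarith [h2 ▸ h1]
  · -- part 2 : φ₂ → ∞
    intro K
    refine ⟨(max 1 (K / C₂ + 2)) ^ (1 / r : ℝ), ?_⟩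
    intro x y hx1 hx2 hyb hyY
    set B : ℝ := max 1 (K / C₂ + 2) with hBdef
    have hB1 : (1:ℝ) ≤ B := le_max_left _ _
    have hB0 : (0:ℝ) < B := by linarith
    have h1 : (B ^ (1 / r : ℝ)) ^ r ≤ |y| ^ r :=
      Real.rpow_le_rpow (by positivity) hyY hr0.le
    have h2 : (B ^ (1 / r : ℝ)) ^ r = B := by
      rw [← Real.rpow_mul hB0.le, show (1 / r) * r = 1 by field_simp, Real.rpow_one]
    rw [h2] at h1
    have h5 : K / C₂ ≤ -x + |y| ^ r := by
      have h6 : K / C₂ + 2 ≤ B := le_max_right _ _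
      linarith
    have h7 := mul_le_mul_of_nonneg_left h5 hC.le
    have hKC : C₂ * (K / C₂) = K := by field_simp
    rw [hKC] at h7
    rw [hφ]; exact h7
  · -- part 3 : Mop → -∞
    intro K
    refine ⟨max Y (Real.sqrt (τ * |K| / c)), ?_⟩
    intro x y hx1 hx2 hyb hyY
    have h1 := hY x y hx1 hx2 hyb (le_trans (le_max_left _ _) hyY)
    have hs : Real.sqrt (τ * |K| / c) ≤ |y| := le_trans (le_max_right _ _) hyY
    have hnn : (0:ℝ) ≤ τ * |K| / c := by positivity
    have hyn : τ * |K| / c ≤ y ^ 2 := by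
      nlinarith [Real.sq_sqrt hnn, Real.sqrt_nonneg (τ * |K| / c), sq_abs y]
    have hck : c * (τ * |K| / c) = τ * |K| := by field_simp
    have h8 : τ * Mop τ a₁ a₂ κ₁ κ₂ φ₂ x y ≤ τ * K := by
      have h9 : -c * y ^ 2 ≤ τ * K := by
        nlinarith [neg_abs_le K, hτ.le, mul_le_mul_of_nonneg_left hyn hc.le]
      linarith
    exact le_of_mul_le_mul_left h8 hτ
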